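/- Let K ⊆ [0,1]² be the attractor of an IFS {f_a}_{a∈A} of contracting similarities, and let L be a nonempty bounded set of lines such that for every u ∈ L there exists a ∈ A with f_a⁻¹(u) ∈ L (a recurrent set). Then every line in L intersects K. -/

import Mathlib

open Metric Set MeasureTheory Filter Real

noncomputable section

abbrev E2 := EuclideanSpace ℝ (Fin 2)

def unitSq : Set E2 := {x | ∀ i, x i ∈ Set.Icc (0:ℝ) 1}

def IsContractingSimilarity (f : E2 → E2) : Prop :=
  ∃ r : ℝ, 0 < r ∧ r < 1 ∧ ∀ x y, dist (f x) (f y) = r * dist x y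

def IsLine (u : Set E2) : Prop :=
  ∃ p v : E2, v ≠ 0 ∧ u = {x | ∃ t : ℝ, x = p + t • v}

def proj (θ : ℝ) (x : E2) : ℝ := -Real.sin θ * x 0 + Real.cos θ * x 1

def lineAt (θ t : ℝ) : Set E2 := {x | proj θ x = t}

lemma isLine_closed {u : Set E2} (h : IsLine u) : IsClosed u := by
  obtain ⟨p, v, hv, rfl⟩ := h
  have : {x : E2 | ∃ t : ℝ, x = p + t • v}
      = (fun x => x - p) ⁻¹' (Submodule.span ℝ {v} : Set E2) := by
    ext x
    simp only [Set.mem_setOf_eq, Set.mem_preimage, SetLike.mem_coe,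
      Submodule.mem_span_singleton]
    constructor
    · rintro ⟨t, rfl⟩; exact ⟨t, by abel⟩
    · rintro ⟨t, ht⟩; exact ⟨t, by rw [ht]; abel⟩
  rw [this]
  exact (Submodule.span ℝ {v}).closed_of_finiteDimensional.preimage
    (continuous_id.sub continuous_const)

lemma isLine_nonempty {u : Set E2} (h : IsLine u) : u.Nonempty := by
  obtain ⟨p, v, hv, rfl⟩ := h
  exact ⟨p, 0, by simp⟩

theorem stmt3 {A : Type*} [Fintype A] [Nonempty A] (f : A → E2 → E2)
    (hf : ∀ a, IsContractingSimilarity (f a)) (K : Set E2)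
    (hKne : K.Nonempty) (hKc : IsCompact K) (hattr : K = ⋃ a, f a '' K)
    (hKI : K ⊆ unitSq) (L : Set (Set E2)) (hLne : L.Nonempty)
    (hLlines : ∀ u ∈ L, IsLine u)
    (hLbdd : ∃ M : ℝ, ∀ u ∈ L, infDist (0 : E2) u ≤ M)
    (hLrec : ∀ u ∈ L, ∃ a, f a ⁻¹' u ∈ L) :
    ∀ u ∈ L, (K ∩ u).Nonempty := by
  obtain ⟨M, hM⟩ := hLbdd
  obtain ⟨k, hk⟩ := hKne
  choose r hr0 hr1 hrd using hf
  have hAne : (Finset.univ : Finset A).Nonempty := Finset.univ_nonempty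
  set R : ℝ := Finset.univ.sup' hAne r with hRdef
  have hR1 : R < 1 := (Finset.sup'_lt_iff hAne).mpr fun a _ => hr1 a
  have hR0 : 0 < R :=
    lt_of_lt_of_le (hr0 (Classical.arbitrary A))
      (Finset.le_sup' r (Finset.mem_univ _))
  have hfK : ∀ a, f a '' K ⊆ K := by
    intro a
    conv_rhs => rw [hattr]
    exact Set.subset_iUnion (fun a => f a '' K) a
  intro u hu
  have key : ∀ n : ℕ, ∃ v ∈ L, ∃ g : E2 → E2, ∃ s : ℝ, 0 ≤ s ∧ s ≤ R ^ n ∧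
      (∀ x y, dist (g x) (g y) = s * dist x y) ∧ g '' v ⊆ u ∧ g '' K ⊆ K := by
    intro n
    induction n with
    | zero =>
      exact ⟨u, hu, id, 1, zero_le_one, by simp, by simp, by simp [Set.image_id],
        by simp [Set.image_id]⟩
    | succ n ih =>
      obtain ⟨v, hv, g, s, hs0, hsn, hgd, hgu, hgK⟩ := ih
      obtain ⟨a, ha⟩ := hLrec v hv
      refine ⟨f a ⁻¹' v, ha, g ∘ f a, s * r a, mul_nonneg hs0 (hr0 a).le, ?_, ?_, ?_, ?_⟩
      · calc s * r a ≤ R ^ n * R :=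
              mul_le_mul hsn (Finset.le_sup' r (Finset.mem_univ a)) (hr0 a).le
                (pow_nonneg hR0.le n)
          _ = R ^ (n + 1) := (pow_succ R n).symm
      · intro x y
        simp only [Function.comp_apply, hgd, hrd a, mul_assoc]
      · calc (g ∘ f a) '' (f a ⁻¹' v) = g '' (f a '' (f a ⁻¹' v)) := by
              rw [Set.image_comp]
          _ ⊆ g '' v := Set.image_mono (f := g) (Set.image_preimage_subset _ _)
          _ ⊆ u := hgu
      · calc (g ∘ f a) '' K = g '' (f a '' K) := by rw [Set.image_comp]
          _ ⊆ g '' K := Set.image_mono (f := g) (hfK a)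
          _ ⊆ K := hgK
  have hne : u.Nonempty := isLine_nonempty (hLlines u hu)
  have hclosed : IsClosed u := isLine_closed (hLlines u hu)
  obtain ⟨x, hxK, hxmin⟩ :=
    hKc.exists_isMinOn ⟨k, hk⟩ (continuous_infDist_pt u).continuousOn
  have hM0 : 0 ≤ M := le_trans infDist_nonneg (hM u hu)
  set C : ℝ := dist k 0 + M + 1 with hCdef
  have hC : 0 < C := by positivity
  have hx0 : infDist x u = 0 := by
    by_contra h
    have hpos : 0 < infDist x u := lt_of_le_of_ne infDist_nonneg (Ne.symm h)
    obtain ⟨n, hn⟩ := exists_pow_lt_of_lt_one (div_pos hpos hC) hR1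
    obtain ⟨v, hv, g, s, hs0, hsn, hgd, hgu, hgK⟩ := key n
    have hvne : v.Nonempty := isLine_nonempty (hLlines v hv)
    have : infDist (0 : E2) v < M + 1 := lt_of_le_of_lt (hM v hv) (by linarith)
    obtain ⟨y, hy, hdy⟩ := (infDist_lt_iff hvne).mp this
    have hky : dist k y ≤ C := by
      calc dist k y ≤ dist k 0 + dist 0 y := dist_triangle _ _ _
        _ ≤ C := by rw [hCdef]; linarith
    have hlt : dist (g k) (g y) < infDist x u := by
      rw [hgd]
      calc s * dist k y ≤ R ^ n * C :=
            mul_le_mul hsn hky dist_nonneg (pow_nonneg hR0.le n)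
        _ < infDist x u := (lt_div_iff₀ hC).mp hn
    have h1 : infDist (g k) u ≤ dist (g k) (g y) :=
      infDist_le_dist_of_mem (hgu ⟨y, hy, rfl⟩)
    have h2 : infDist x u ≤ infDist (g k) u := hxmin (hgK ⟨k, hk, rfl⟩)
    linarith
  exact ⟨x, hxK, (hclosed.mem_iff_infDist_zero hne).mpr hx0⟩
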